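/- For any integer k and integer n \ge 1, B_n^{(k)}(x) = x B_{n-1}^{(k)}(x) + \sum_{l=0}^{n-1} (-1)^{n-1-l} \binom{n-1}{l} \left\{ \sum_{m=0}^{n-1} (-1)^m \frac{(m+1)!}{(m+2)^k} S_2(n-1-l, m) \right\} (x-1)^l. -/

import Mathlib

open PowerSeries Finset Nat

/-- The formal power series `e^{-t}`. -/
noncomputable def expNeg : PowerSeries ℂ := PowerSeries.rescale (-1) (PowerSeries.exp ℂ)

/-- The generating function `Li_k(1-e^{-t})/(1-e^{-t}) = ∑_{m≥0} (1-e^{-t})^m/(m+1)^k`,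
given coefficientwise (the sum truncates since `(1-e^{-t})^m` has order `≥ m`). -/
noncomputable def polyBernoulliGF (k : ℤ) : PowerSeries ℂ :=
  PowerSeries.mk fun n => ∑ m ∈ Finset.range (n + 1),
    (((m : ℂ) + 1) ^ k)⁻¹ * PowerSeries.coeff n ((1 - expNeg) ^ m)

/-- The poly-Bernoulli polynomial `B_n^{(k)}(x)`, defined by
`Li_k(1-e^{-t})/(1-e^{-t}) · e^{xt} = ∑ B_n^{(k)}(x) tⁿ/n!`. -/
noncomputable def polyBernoulli (k : ℤ) (n : ℕ) (x : ℂ) : ℂ :=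
  (n ! : ℂ) * PowerSeries.coeff n
    (polyBernoulliGF k * PowerSeries.mk fun j => x ^ j / (j ! : ℂ))

/-- Stirling numbers of the second kind, via `(e^t-1)^m = m! ∑_{l} S₂(l,m) t^l/l!`. -/
noncomputable def stirling2 (l m : ℕ) : ℂ :=
  (l ! : ℂ) / (m ! : ℂ) * PowerSeries.coeff l ((PowerSeries.exp ℂ - 1) ^ m)

/-! ### Auxiliary lemmas -/

lemma coeff_expNeg (n : ℕ) : PowerSeries.coeff n expNeg = (-1)^n / (n ! : ℂ) := by
  simp [expNeg, coeff_rescale, PowerSeries.coeff_exp]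
  ring

lemma A_vanish {j m : ℕ} (h : j < m) : PowerSeries.coeff j ((1 - expNeg) ^ m) = 0 := by
  have hX : (PowerSeries.X : ℂ⟦X⟧) ∣ (1 - expNeg) := by
    rw [PowerSeries.X_dvd_iff]
    rw [map_sub, map_one, ← coeff_zero_eq_constantCoeff_apply, coeff_expNeg]
    norm_num
  exact PowerSeries.X_pow_dvd_iff.mp (pow_dvd_pow_of_dvd hX m) j h

lemma deriv_expNeg : d⁄dX ℂ expNeg = -expNeg := by
  ext j
  rw [PowerSeries.coeff_derivative]
  simp only [map_neg, coeff_expNeg, factorial_succ, pow_succ]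
  have h1 : ((j:ℂ)+1) ≠ 0 := by
    have h : ((j+1 : ℕ) : ℂ) ≠ 0 := Nat.cast_ne_zero.mpr (by omega)
    push_cast at h; exact h
  have h2 : ((j ! : ℂ)) ≠ 0 := Nat.cast_ne_zero.mpr j.factorial_ne_zero
  field_simp
  push_cast
  ring

lemma key_deriv (m : ℕ) :
    d⁄dX ℂ ((1 - expNeg) ^ (m+1)) = (m+1 : ℕ) • (expNeg * (1 - expNeg) ^ m) := by
  rw [Derivation.leibniz_pow]
  have : d⁄dX ℂ (1 - expNeg) = expNeg := by
    rw [map_sub, deriv_expNeg]; simp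
  rw [this, smul_eq_mul, mul_comm]
  simp

lemma key_coeff (j m : ℕ) :
    ((j:ℂ)+1) * PowerSeries.coeff (j+1) ((1 - expNeg) ^ (m+1)) =
      ((m:ℂ)+1) * PowerSeries.coeff j (expNeg * (1 - expNeg) ^ m) := by
  have h := congrArg (PowerSeries.coeff j) (key_deriv m)
  rw [PowerSeries.coeff_derivative, map_nsmul, nsmul_eq_mul] at h
  rw [mul_comm ((j:ℂ)+1), h]
  push_cast
  ring

/-- The series `∑_m (m+1)(1-e^{-t})^m/(m+2)^k`, coefficientwise. -/
noncomputable def Hgf (k : ℤ) : PowerSeries ℂ :=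
  PowerSeries.mk fun j => ∑ m ∈ Finset.range (j + 1),
    ((m : ℂ) + 1) * (((m : ℂ) + 2) ^ k)⁻¹ * PowerSeries.coeff j ((1 - expNeg) ^ m)

lemma deriv_GF (k : ℤ) : d⁄dX ℂ (polyBernoulliGF k) = expNeg * Hgf k := by
  ext j
  have h0 : PowerSeries.coeff (j+1) ((1 - expNeg) ^ 0) = 0 := by simp
  rw [PowerSeries.coeff_derivative, polyBernoulliGF, PowerSeries.coeff_mk,
    Finset.sum_range_succ', h0, mul_zero, add_zero, Finset.sum_mul]
  rw [PowerSeries.coeff_mul]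
  have hH : ∀ p ∈ antidiagonal j, (PowerSeries.coeff p.1 expNeg) * (PowerSeries.coeff p.2 (Hgf k))
      = ∑ m ∈ Finset.range (j+1), ((m : ℂ) + 1) * (((m : ℂ) + 2) ^ k)⁻¹ *
        ((PowerSeries.coeff p.1 expNeg) * PowerSeries.coeff p.2 ((1 - expNeg) ^ m)) := by
    intro p hp
    rw [Finset.HasAntidiagonal.mem_antidiagonal] at hp
    rw [Hgf, PowerSeries.coeff_mk, Finset.mul_sum]
    rw [Finset.sum_subset (Finset.range_subset_range.mpr (by omega : p.2 + 1 ≤ j + 1))]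
    · exact Finset.sum_congr rfl fun m _ => by ring
    · intro m _ hm
      rw [A_vanish (by simp at hm ⊢; omega)]
      ring
  rw [Finset.sum_congr rfl hH, Finset.sum_comm]
  refine Finset.sum_congr rfl fun m _ => ?_
  simp only [← Finset.mul_sum]
  rw [← PowerSeries.coeff_mul]
  have hc : ((↑(m+1):ℂ)+1) = ((m:ℂ)+2) := by push_cast; ring
  rw [hc]
  have h2 := key_coeff j m
  calc (((m:ℂ)+2)^k)⁻¹ * PowerSeries.coeff (j+1) ((1-expNeg)^(m+1)) * ((j:ℂ)+1)
      = (((m:ℂ)+2)^k)⁻¹ * (((j:ℂ)+1) * PowerSeries.coeff (j+1) ((1-expNeg)^(m+1))) := by ring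
    _ = (((m:ℂ)+2)^k)⁻¹ * (((m:ℂ)+1) * PowerSeries.coeff j (expNeg * (1-expNeg)^m)) := by rw [h2]
    _ = _ := by ring

/-- The exponential series `e^{at}`. -/
noncomputable def Ee (a : ℂ) : PowerSeries ℂ := PowerSeries.mk fun j => a ^ j / (j ! : ℂ)

lemma Ee_eq (a : ℂ) : Ee a = PowerSeries.rescale a (PowerSeries.exp ℂ) := by
  ext j
  simp [Ee, coeff_rescale, PowerSeries.coeff_exp]
  ring

lemma Ee_mul (a b : ℂ) : Ee a * Ee b = Ee (a + b) := by
  rw [Ee_eq, Ee_eq, Ee_eq, exp_mul_exp_eq_exp_add]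

lemma expNeg_eq : expNeg = Ee (-1) := (Ee_eq (-1)).symm

lemma deriv_Ee (a : ℂ) : d⁄dX ℂ (Ee a) = a • Ee a := by
  ext j
  rw [PowerSeries.coeff_derivative]
  simp only [Ee, PowerSeries.coeff_mk, map_smul, smul_eq_mul, factorial_succ, pow_succ]
  have h1 : ((j:ℂ)+1) ≠ 0 := by
    have h : ((j+1 : ℕ) : ℂ) ≠ 0 := Nat.cast_ne_zero.mpr (by omega)
    push_cast at h; exact h
  have h2 : ((j ! : ℂ)) ≠ 0 := Nat.cast_ne_zero.mpr j.factorial_ne_zero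
  field_simp
  push_cast
  ring

lemma A_eq (p m : ℕ) : PowerSeries.coeff p ((1 - expNeg) ^ m)
    = (-1)^(p+m) * PowerSeries.coeff p ((PowerSeries.exp ℂ - 1) ^ m) := by
  have h1 : (1 - expNeg) = PowerSeries.rescale (-1 : ℂ) (1 - PowerSeries.exp ℂ) := by
    rw [map_sub, map_one, expNeg]
  have h2 : (1 - PowerSeries.exp ℂ) ^ m
      = PowerSeries.C ((-1)^m) * (PowerSeries.exp ℂ - 1) ^ m := by
    rw [show (1 - PowerSeries.exp ℂ) = -(PowerSeries.exp ℂ - 1) by ring, neg_pow]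
    simp [map_pow]
  rw [h1, ← map_pow, coeff_rescale, h2, PowerSeries.coeff_C_mul, pow_add]
  ring

lemma key_sum (k : ℤ) (N : ℕ) (x : ℂ) :
    (N ! : ℂ) * PowerSeries.coeff N (Hgf k * Ee (x-1))
      = ∑ l ∈ Finset.range (N+1), (-1 : ℂ) ^ (N - l) * ((N).choose l : ℂ) *
          (∑ m ∈ Finset.range (N+1),
            (-1 : ℂ) ^ m * ((m + 1)! : ℂ) / ((m : ℂ) + 2) ^ k * stirling2 (N - l) m) *
          (x - 1) ^ l := by
  rw [mul_comm (Hgf k), PowerSeries.coeff_mul, Finset.Nat.sum_antidiagonal_eq_sum_range_succ_mk,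
    Finset.mul_sum]
  refine Finset.sum_congr rfl fun l hl => ?_
  rw [Finset.mem_range] at hl
  have hl' : l ≤ N := by omega
  simp only [Ee, Hgf, PowerSeries.coeff_mk]
  rw [Finset.sum_subset (Finset.range_subset_range.mpr (by omega : N - l + 1 ≤ N + 1))
    (fun m _ hm => by rw [A_vanish (by simp at hm ⊢; omega), mul_zero])]
  simp only [Finset.mul_sum, Finset.sum_mul]
  refine Finset.sum_congr rfl fun m _ => ?_
  rw [stirling2, A_eq, pow_add]
  have hNf : ((N.choose l : ℕ) : ℂ) * (l ! : ℂ) * ((N - l)! : ℂ) = (N ! : ℂ) := by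
    exact_mod_cast congrArg (Nat.cast : ℕ → ℂ) (Nat.choose_mul_factorial_mul_factorial hl')
  have hm1 : ((m+1)! : ℂ) = ((m:ℂ)+1) * (m ! : ℂ) := by
    rw [factorial_succ]; push_cast; ring
  have hl0 : (l ! : ℂ) ≠ 0 := Nat.cast_ne_zero.mpr l.factorial_ne_zero
  have hm0 : (m ! : ℂ) ≠ 0 := Nat.cast_ne_zero.mpr m.factorial_ne_zero
  rw [hm1]
  have hz : ((m:ℂ)+2)^k ≠ 0 := zpow_ne_zero k (by
    have h : ((m+2 : ℕ) : ℂ) ≠ 0 := Nat.cast_ne_zero.mpr (by omega)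
    push_cast at h; exact h)
  field_simp [hz]
  rw [← hNf]
  ring

theorem polyBernoulli_thm3 (k : ℤ) (n : ℕ) (hn : 1 ≤ n) (x : ℂ) :
    polyBernoulli k n x =
      x * polyBernoulli k (n - 1) x +
        ∑ l ∈ Finset.range n, (-1 : ℂ) ^ (n - 1 - l) * ((n - 1).choose l : ℂ) *
          (∑ m ∈ Finset.range n,
            (-1 : ℂ) ^ m * ((m + 1)! : ℂ) / ((m : ℂ) + 2) ^ k * stirling2 (n - 1 - l) m) *
          (x - 1) ^ l := by
  obtain ⟨N, rfl⟩ : ∃ N, n = N + 1 := ⟨n - 1, (Nat.succ_pred_eq_of_pos hn).symm⟩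
  simp only [Nat.add_sub_cancel]
  have hD : d⁄dX ℂ (polyBernoulliGF k * Ee x)
      = Hgf k * Ee (x - 1) + x • (polyBernoulliGF k * Ee x) := by
    rw [Derivation.leibniz, deriv_GF, deriv_Ee, smul_eq_mul, smul_eq_mul]
    have : Ee x * (expNeg * Hgf k) = Hgf k * Ee (x-1) := by
      rw [expNeg_eq, ← mul_assoc, Ee_mul]
      ring_nf
    rw [this]
    rw [mul_smul_comm]
    ring_nf
  have hc := congrArg (PowerSeries.coeff N) hD
  rw [PowerSeries.coeff_derivative, map_add, map_smul, smul_eq_mul] at hc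
  have hB : ∀ j, polyBernoulli k j x
      = (j ! : ℂ) * PowerSeries.coeff j (polyBernoulliGF k * Ee x) := fun j => rfl
  rw [hB, hB]
  have hfac : ((N+1)! : ℂ) = ((N:ℂ)+1) * (N ! : ℂ) := by
    rw [factorial_succ]; push_cast; ring
  rw [hfac]
  rw [← key_sum k N x]
  linear_combination (N ! : ℂ) * hc
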